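/- Let q be an odd prime power with q ≡ 1 (mod 3), and let g denote Gauss sums with respect to a fixed generator ω of the multiplicative characters of F_q^× and a nontrivial additive character. Write q^× = q−1. Then g(q^×/3)^3 · ω(2)^{−q^×/3} = (−1)^{q^×/2} · g(q^×/2) · g(q^×/6) · g(q^×/3), and similarly g(2q^×/3)^3 · ω(2)^{−2q^×/3} = (−1)^{q^×/2} · g(q^×/2) · g(5q^×/6) · g(2q^×/3). -/

import Mathlib

open Finset

section GSAux

private lemma gs_sum_units {F : Type} [Field F] [Fintype F] [DecidableEq F]
    (χ : MulChar F ℂ) (Θ : AddChar F ℂ) :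
    (∑ x : Fˣ, χ (x : F) * Θ (x : F)) = gaussSum χ Θ := by
  rw [gaussSum, Finset.sum_eq_sum_sdiff_singleton_add (Finset.mem_univ (0 : F)),
    MulChar.map_zero, zero_mul, add_zero]
  rw [show ∑ x : Fˣ, χ (x : F) * Θ (x : F) = ∑ x : {a : F // a ≠ 0}, χ x * Θ x from
    Fintype.sum_equiv unitsEquivNeZero _ _ (fun x => rfl)]
  exact (Finset.sum_subtype (p := fun a : F => a ≠ 0) _ (fun x => by simp)
    (fun x => χ x * Θ x)).symm

private lemma gs_orderOf {F : Type} [Field F] [Fintype F] [DecidableEq F]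
    (ω : MulChar F ℂ) (hω : ∀ χ : MulChar F ℂ, ∃ m : ℤ, χ = ω ^ m) :
    orderOf ω = Fintype.card F - 1 := by
  have : NeZero ((Monoid.exponent Fˣ : ℂ)) :=
    ⟨Nat.cast_ne_zero.mpr Monoid.exponent_ne_zero_of_finite⟩
  have hcard : Nat.card (MulChar F ℂ) = Fintype.card F - 1 := by
    rw [MulChar.card_eq_card_units_of_hasEnoughRootsOfUnity, Nat.card_eq_fintype_card,
      Fintype.card_units]
  have htop : Subgroup.zpowers ω = ⊤ := by
    rw [Subgroup.eq_top_iff']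
    intro χ
    obtain ⟨m, rfl⟩ := hω χ
    exact Subgroup.zpow_mem _ (Subgroup.mem_zpowers ω) m
  rw [← Nat.card_zpowers, htop, ← hcard]
  exact Subgroup.card_top


private lemma gs_quadchar {F : Type} [Field F] [Fintype F] [DecidableEq F]
    (hodd : Odd (Fintype.card F))
    (ω : MulChar F ℂ) (hω : ∀ χ : MulChar F ℂ, ∃ m : ℤ, χ = ω ^ m)
    (hn : orderOf ω = Fintype.card F - 1) :
    (quadraticChar F).ringHomComp (Int.castRingHom ℂ) = ω ^ ((Fintype.card F - 1) / 2) := by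
  have hchar : ringChar F ≠ 2 := by
    intro h
    have h2 := FiniteField.even_card_of_char_two h
    have h1 := Nat.odd_iff.mp hodd
    omega
  set η₀ := (quadraticChar F).ringHomComp (Int.castRingHom ℂ) with hη₀
  have hne1 : η₀ ≠ 1 := by
    obtain ⟨a, ha⟩ := quadraticChar_exists_neg_one' hchar
    intro h
    have h1 : η₀ (a : F) = ((-1 : ℤ) : ℂ) := by
      simp only [hη₀, MulChar.ringHomComp_apply, ha]; rfl
    rw [h, MulChar.one_apply_coe] at h1
    norm_num at h1
  have hsq : η₀ ^ 2 = 1 := by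
    refine MulChar.ext fun a => ?_
    rw [MulChar.pow_apply_coe, MulChar.one_apply_coe]
    have : (quadraticChar F (a : F)) ^ 2 = 1 := quadraticChar_sq_one a.ne_zero
    simp only [hη₀, MulChar.ringHomComp_apply]
    rw [← map_pow]
    rw [this]
    norm_num
  obtain ⟨m, hm⟩ := hω η₀
  have h2m : ((Fintype.card F - 1 : ℕ) : ℤ) ∣ 2 * m := by
    rw [← hn, orderOf_dvd_iff_zpow_eq_one]
    rw [mul_comm, zpow_mul, ← hm, show ((2:ℤ)) = ((2:ℕ):ℤ) from rfl, zpow_natCast]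
    exact hsq
  have hndvd : ¬ ((Fintype.card F - 1 : ℕ) : ℤ) ∣ m := by
    rw [← hn, orderOf_dvd_iff_zpow_eq_one, ← hm]
    exact hne1
  have hcard2 : (Fintype.card F - 1) = 2 * ((Fintype.card F - 1) / 2) := by
    have h1 := Nat.odd_iff.mp hodd
    have h2 := Fintype.one_lt_card (α := F)
    omega
  set h := (Fintype.card F - 1) / 2 with hh
  have hdvd : (h : ℤ) ∣ m := by
    obtain ⟨c, hc⟩ := h2m
    refine ⟨c, ?_⟩
    have : (2 : ℤ) * m = 2 * (h * c) := by
      rw [hc, hcard2]; push_cast; ring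
    linarith
  obtain ⟨c, hc⟩ := hdvd
  have hcodd : ¬ (2 : ℤ) ∣ c := by
    intro ⟨d, hd⟩
    apply hndvd
    rw [hc, hd, hcard2]
    exact ⟨d, by push_cast; ring⟩
  obtain ⟨d, hd⟩ : ∃ d : ℤ, c = 2 * d + 1 := ⟨(c-1)/2, by omega⟩
  have homega : ω ^ ((Fintype.card F - 1 : ℕ) : ℤ) = 1 := by
    rw [zpow_natCast, ← hn, pow_orderOf_eq_one]
  have : η₀ = ω ^ ((h : ℕ) : ℤ) := by
    rw [hm, hc, hd, show (h : ℤ) * (2 * d + 1) = ((Fintype.card F - 1 : ℕ) : ℤ) * d + h by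
      rw [hcard2]; push_cast; ring]
    rw [zpow_add, zpow_mul, homega, one_zpow, one_mul]
  rw [this, zpow_natCast]


private lemma gs_jacobi_sq {F : Type} [Field F] [Fintype F] [DecidableEq F]
    (hchar : ringChar F ≠ 2) (χ : MulChar F ℂ) (hχ : χ ≠ 1) :
    jacobiSum χ χ =
      (χ 4)⁻¹ * jacobiSum ((quadraticChar F).ringHomComp (Int.castRingHom ℂ)) χ := by
  set η := (quadraticChar F).ringHomComp (Int.castRingHom ℂ) with hη
  have h2 : (2 : F) ≠ 0 := Ring.two_ne_zero hchar
  have h4 : (4 : F) ≠ 0 := by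
    have : (4 : F) = 2 * 2 := by norm_num
    rw [this]; exact mul_ne_zero h2 h2
  have hinv : χ ((4 : F)⁻¹) = (χ 4)⁻¹ := by
    refine eq_inv_of_mul_eq_one_left ?_
    rw [← map_mul, inv_mul_cancel₀ h4, map_one]
  let e : F ≃ F :=
    { toFun := fun u => (1 + u) / 2
      invFun := fun x => 2 * x - 1
      left_inv := fun u => by field_simp; ring
      right_inv := fun x => by field_simp; ring }
  have step1 : jacobiSum χ χ = ∑ x : F, χ (x * (1 - x)) := by
    rw [jacobiSum]
    exact sum_congr rfl fun x _ => (map_mul χ x (1 - x)).symm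
  have step2 : ∑ x : F, χ (x * (1 - x)) = ∑ u : F, χ ((4 : F)⁻¹ * (1 - u ^ 2)) := by
    rw [← Equiv.sum_comp e (fun x => χ (x * (1 - x)))]
    refine sum_congr rfl fun u _ => ?_
    congr 1
    show (1 + u) / 2 * (1 - (1 + u) / 2) = (4 : F)⁻¹ * (1 - u ^ 2)
    field_simp
    ring
  have step3 : ∑ u : F, χ ((4 : F)⁻¹ * (1 - u ^ 2)) = (χ 4)⁻¹ * ∑ u : F, χ (1 - u ^ 2) := by
    rw [mul_sum]
    exact sum_congr rfl fun u _ => by rw [map_mul, hinv]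
  have step4 : ∑ u : F, χ (1 - u ^ 2) =
      ∑ t : F, ((univ.filter (fun u : F => u ^ 2 = t)).card : ℂ) * χ (1 - t) := by
    rw [← Finset.sum_fiberwise_of_maps_to' (g := fun u : F => u ^ 2)
      (fun i _ => mem_univ _) (fun t => χ (1 - t))]
    exact sum_congr rfl fun t _ => by rw [sum_const, nsmul_eq_mul]
  have step5 : ∀ t : F, ((univ.filter (fun u : F => u ^ 2 = t)).card : ℂ) = η t + 1 := by
    intro t
    have h := quadraticChar_card_sqrts hchar t
    have hfin : {x : F | x ^ 2 = t}.toFinset = univ.filter (fun u : F => u ^ 2 = t) := by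
      ext x; simp
    rw [hfin] at h
    have : ((univ.filter (fun u : F => u ^ 2 = t)).card : ℤ) = quadraticChar F t + 1 := h
    calc ((univ.filter (fun u : F => u ^ 2 = t)).card : ℂ)
        = (((univ.filter (fun u : F => u ^ 2 = t)).card : ℤ) : ℂ) := by push_cast; ring
      _ = ((quadraticChar F t + 1 : ℤ) : ℂ) := by rw [this]
      _ = η t + 1 := by push_cast; rfl
  have step6 : ∑ t : F, (η t + 1) * χ (1 - t) = jacobiSum η χ := by
    have hzero : ∑ t : F, χ (1 - t) = 0 := by
      have h := Equiv.sum_comp (Equiv.subLeft (1 : F)) (fun s => χ s)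
      simp only [Equiv.subLeft_apply] at h
      rw [h]
      exact MulChar.sum_eq_zero_of_ne_one hχ
    calc ∑ t : F, (η t + 1) * χ (1 - t)
        = ∑ t : F, (η t * χ (1 - t) + χ (1 - t)) := by
          exact sum_congr rfl fun t _ => by ring
      _ = jacobiSum η χ + ∑ t : F, χ (1 - t) := by rw [sum_add_distrib]; rfl
      _ = jacobiSum η χ := by rw [hzero, add_zero]
  rw [step1, step2, step3]
  congr 1
  rw [step4]
  rw [← step6]
  exact sum_congr rfl fun t _ => by rw [step5 t]

private lemma gs_inv_pair {F : Type} [Field F] [Fintype F] [DecidableEq F]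
    {χ : MulChar F ℂ} (hχ : χ ≠ 1) {Θ : AddChar F ℂ} (hΘ : Θ ≠ 1) :
    gaussSum χ Θ * gaussSum χ⁻¹ Θ = (χ (-1))⁻¹ * Fintype.card F := by
  have hψ := AddChar.IsPrimitive.of_ne_one hΘ
  have h1 := gaussSum_mul_gaussSum_eq_card hχ hψ
  have h2 : χ⁻¹ ((-1 : Fˣ) : F) * gaussSum χ⁻¹ (Θ.mulShift ((-1 : Fˣ) : F)) = gaussSum χ⁻¹ Θ :=
    gaussSum_mulShift χ⁻¹ Θ (-1)
  have hcoe : ((-1 : Fˣ) : F) = (-1 : F) := by simp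
  rw [hcoe, ← AddChar.inv_mulShift] at h2
  rw [MulChar.inv_apply_eq_inv'] at h2
  rw [← h2, ← mul_assoc, mul_comm (gaussSum χ Θ) ((χ (-1))⁻¹), mul_assoc, h1]

private lemma gs_HD {F : Type} [Field F] [Fintype F] [DecidableEq F]
    (hchar : ringChar F ≠ 2) {χ : MulChar F ℂ} (hχ : χ ≠ 1) (hχ2 : χ * χ ≠ 1)
    (hηχ : (quadraticChar F).ringHomComp (Int.castRingHom ℂ) * χ ≠ 1)
    {Θ : AddChar F ℂ} (hΘ : Θ ≠ 1) :
    gaussSum χ Θ * gaussSum ((quadraticChar F).ringHomComp (Int.castRingHom ℂ) * χ) Θ =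
      (χ 4)⁻¹ * gaussSum ((quadraticChar F).ringHomComp (Int.castRingHom ℂ)) Θ *
        gaussSum (χ * χ) Θ := by
  set η := (quadraticChar F).ringHomComp (Int.castRingHom ℂ) with hηdef
  have hψ := AddChar.IsPrimitive.of_ne_one hΘ
  have hq : ((Fintype.card F : ℂ)) ≠ 0 := Nat.cast_ne_zero.mpr Fintype.card_ne_zero
  have hg1 : gaussSum χ Θ ≠ 0 := gaussSum_ne_zero_of_nontrivial hq hχ hψ
  have h1 := jacobiSum_mul_nontrivial hχ2 Θ
  have h2 := jacobiSum_mul_nontrivial hηχ Θ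
  have h3 := gs_jacobi_sq hchar χ hχ
  apply mul_right_cancel₀ hg1
  linear_combination (-(gaussSum (η * χ) Θ)) * h1 +
    ((χ 4)⁻¹ * gaussSum (χ * χ) Θ) * h2 +
    (gaussSum (η * χ) Θ * gaussSum (χ * χ) Θ) * h3

end GSAux



/-- For `q ≡ 1 (mod 3)`, with `q^× = q - 1`:
`g(q^×/3)^3 ω(2)^{-q^×/3} = (-1)^{q^×/2} g(q^×/2) g(q^×/6) g(q^×/3)` and
`g(2q^×/3)^3 ω(2)^{-2q^×/3} = (-1)^{q^×/2} g(q^×/2) g(5q^×/6) g(2q^×/3)`. -/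
theorem gauss_sum_cubic_identity
    (F : Type) [Field F] [Fintype F] [DecidableEq F] (hodd : Odd (Fintype.card F))
    (h3 : Fintype.card F % 3 = 1)
    (ω : MulChar F ℂ) (hω : ∀ χ : MulChar F ℂ, ∃ m : ℤ, χ = ω ^ m)
    (Θ : AddChar F ℂ) (hΘ : Θ ≠ 1)
    (g : ℤ → ℂ) (hg : ∀ m : ℤ, g m = ∑ x : Fˣ, (ω ^ m) (x : F) * Θ (x : F)) :
    g (((Fintype.card F - 1) / 3 : ℕ)) ^ 3 *
        (ω 2) ^ (-(((Fintype.card F - 1) / 3 : ℕ) : ℤ)) =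
      (-1 : ℂ) ^ ((Fintype.card F - 1) / 2) * g (((Fintype.card F - 1) / 2 : ℕ)) *
        g (((Fintype.card F - 1) / 6 : ℕ)) * g (((Fintype.card F - 1) / 3 : ℕ)) ∧
    g ((2 * (Fintype.card F - 1) / 3 : ℕ)) ^ 3 *
        (ω 2) ^ (-((2 * (Fintype.card F - 1) / 3 : ℕ) : ℤ)) =
      (-1 : ℂ) ^ ((Fintype.card F - 1) / 2) * g (((Fintype.card F - 1) / 2 : ℕ)) *
        g ((5 * (Fintype.card F - 1) / 6 : ℕ)) * g ((2 * (Fintype.card F - 1) / 3 : ℕ)) := by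
  classical
  have hchar : ringChar F ≠ 2 := by
    intro h
    have h2 := FiniteField.even_card_of_char_two h
    have h1 := Nat.odd_iff.mp hodd
    omega
  have hcard2 : 1 < Fintype.card F := Fintype.one_lt_card
  have hmod : Fintype.card F % 2 = 1 := Nat.odd_iff.mp hodd
  obtain ⟨k, hk⟩ : ∃ k : ℕ, Fintype.card F - 1 = 6 * k := ⟨(Fintype.card F - 1) / 6, by omega⟩
  have hcard7 : 7 ≤ Fintype.card F := by omega
  have hk1 : 1 ≤ k := by omega
  have horder : orderOf ω = Fintype.card F - 1 := gs_orderOf ω hω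
  have hωtop : ω ^ (6 * k) = 1 := by
    rw [← hk, ← horder]; exact pow_orderOf_eq_one ω
  have hpow_ne : ∀ a : ℕ, 0 < a → a < 6 * k → ω ^ a ≠ 1 := by
    intro a h1 h2 h
    have hd := orderOf_dvd_of_pow_eq_one h
    rw [horder, hk] at hd
    have := Nat.le_of_dvd h1 hd
    omega
  -- ω (-1) = -1
  obtain ⟨G, hG⟩ := IsCyclic.exists_monoid_generator (α := Fˣ)
  have hGord : orderOf G = 6 * k := by
    rw [← hk, ← Fintype.card_units, ← Nat.card_eq_fintype_card]
    apply orderOf_eq_card_of_forall_mem_zpowers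
    intro x
    obtain ⟨j, hj⟩ := hG x
    exact Subgroup.mem_zpowers_iff.mpr ⟨(j : ℤ), by rw [zpow_natCast]; exact hj⟩
  have hval : ∀ a : ℕ, ω ^ a = 1 ↔ (ω (G : F)) ^ a = 1 := by
    intro a
    constructor
    · intro h
      have := congrArg (fun χ : MulChar F ℂ => χ (G : F)) h
      simpa [MulChar.pow_apply_coe, MulChar.one_apply_coe] using this
    · intro h
      refine MulChar.ext fun x => ?_
      obtain ⟨j, hj⟩ := hG x
      rw [MulChar.pow_apply_coe, MulChar.one_apply_coe, ← hj]
      push_cast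
      rw [map_pow, ← pow_mul, mul_comm j a, pow_mul, h, one_pow]
  have hζord : orderOf (ω (G : F)) = 6 * k := by
    calc orderOf (ω (G : F)) = orderOf ω := orderOf_eq_orderOf_iff.mpr fun n => (hval n).symm
      _ = 6 * k := by rw [horder, hk]
  have hζ3k : (ω (G : F)) ^ (3 * k) = -1 := by
    have hsq : ((ω (G : F)) ^ (3 * k)) ^ 2 = 1 := by
      rw [← pow_mul, show 3 * k * 2 = 6 * k by ring, ← hζord, pow_orderOf_eq_one]
    rcases mul_self_eq_one_iff.mp
      (show (ω (G : F)) ^ (3 * k) * (ω (G : F)) ^ (3 * k) = 1 by rw [← sq]; exact hsq)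
      with h | h
    · exfalso
      exact hpow_ne (3 * k) (by omega) (by omega) ((hval (3 * k)).mpr h)
    · exact h
  have hω1 : ω (-1 : F) = -1 := by
    obtain ⟨j, hj'⟩ := hG (-1 : Fˣ)
    have hj : G ^ j = -1 := hj'
    have hne : (-1 : Fˣ) ≠ 1 := by
      intro h
      exact Ring.neg_one_ne_one_of_char_ne_two hchar (by
        have := congrArg (Units.val) h; simpa using this)
    have h2j : G ^ (2 * j) = 1 := by
      rw [two_mul, pow_add, hj]; simp
    have hdvd : 6 * k ∣ 2 * j := hGord ▸ orderOf_dvd_of_pow_eq_one h2j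
    obtain ⟨c, hc⟩ := hdvd
    have hcodd : c % 2 = 1 := by
      rcases Nat.even_or_odd c with he | ho
      · exfalso
        obtain ⟨d, hd⟩ := he
        have hjd : j = 6 * k * d := by
          refine Nat.eq_of_mul_eq_mul_left (show 0 < 2 by norm_num) ?_
          rw [hc, hd]; ring
        have : G ^ j = 1 := by
          rw [hjd, pow_mul, ← hGord, pow_orderOf_eq_one, one_pow]
        exact hne (by rw [← hj, this])
      · exact Nat.odd_iff.mp ho
    have hj3k : j = 3 * k * c := by
      refine Nat.eq_of_mul_eq_mul_left (show 0 < 2 by norm_num) ?_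
      rw [hc]; ring
    have : ω ((-1 : Fˣ) : F) = (ω (G : F)) ^ j := by
      rw [← hj]; push_cast; rw [map_pow]
    rw [show ((-1 : Fˣ) : F) = (-1 : F) by simp] at this
    rw [this, hj3k, pow_mul, hζ3k]
    exact Odd.neg_one_pow (Nat.odd_iff.mpr hcodd)
  -- main body
  have hψ := AddChar.IsPrimitive.of_ne_one hΘ
  have hq : ((Fintype.card F : ℂ)) ≠ 0 := Nat.cast_ne_zero.mpr Fintype.card_ne_zero
  have hηω : (quadraticChar F).ringHomComp (Int.castRingHom ℂ) = ω ^ (3 * k) := by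
    rw [gs_quadchar hodd ω hω horder]
    congr 1
    omega
  -- g in terms of gaussSum
  have hGS : ∀ a : ℕ, g a = gaussSum (ω ^ a) Θ := by
    intro a
    rw [hg, ← gs_sum_units (ω ^ a) Θ]
    exact Fintype.sum_congr _ _ fun x => by rw [zpow_natCast]
  have hGne : ∀ a : ℕ, 0 < a → a < 6 * k → gaussSum (ω ^ a) Θ ≠ 0 := fun a h1 h2 =>
    gaussSum_ne_zero_of_nontrivial hq (hpow_ne a h1 h2) hψ
  -- values of characters
  have hpa : ∀ a : ℕ, a ≠ 0 → ∀ x : F, (ω ^ a) x = (ω x) ^ a := fun a ha x =>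
    MulChar.pow_apply' ω ha x
  have hm1 : ∀ a : ℕ, a ≠ 0 → (ω ^ a) (-1 : F) = (-1 : ℂ) ^ a := by
    intro a ha
    rw [hpa a ha, hω1]
  have hω2six : (ω 2) ^ (6 * k) = 1 := by
    have h2u : IsUnit (2 : F) := isUnit_iff_ne_zero.mpr (Ring.two_ne_zero hchar)
    have := congrArg (fun χ : MulChar F ℂ => χ (2 : F)) hωtop
    simpa [hpa (6 * k) (by omega), MulChar.one_apply h2u] using this
  have hval4 : ∀ a : ℕ, a ≠ 0 → (ω ^ a) (4 : F) = (ω 2) ^ (2 * a) := by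
    intro a ha
    rw [hpa a ha, show (4 : F) = 2 * 2 by norm_num, map_mul, ← sq, ← pow_mul]
  -- inverse relations among powers
  have hinvpow : ∀ a b : ℕ, a + b = 6 * k → (ω ^ a)⁻¹ = ω ^ b := by
    intro a b hab
    refine inv_eq_of_mul_eq_one_right ?_
    rw [← pow_add, hab, hωtop]
  -- the three main equations
  set A1 := gaussSum (ω ^ (1 * k)) Θ with hA1
  set A2 := gaussSum (ω ^ (2 * k)) Θ with hA2
  set A3 := gaussSum (ω ^ (3 * k)) Θ with hA3
  set A4 := gaussSum (ω ^ (4 * k)) Θ with hA4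
  set A5 := gaussSum (ω ^ (5 * k)) Θ with hA5
  set ε := (-1 : ℂ) ^ (3 * k) with hε
  have heps : ε * ε = 1 := by
    rw [hε, ← pow_add]
    exact Even.neg_one_pow ⟨3 * k, by ring⟩
  -- e2 : A2 * A4 = q
  have he2 : A2 * A4 = (Fintype.card F : ℂ) := by
    have h := gs_inv_pair (hpow_ne (2 * k) (by omega) (by omega)) hΘ (χ := ω ^ (2 * k))
    rw [hinvpow (2 * k) (4 * k) (by ring), hm1 (2 * k) (by omega)] at h
    rw [hA2, hA4, h, Even.neg_one_pow ⟨k, by ring⟩, inv_one, one_mul]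
  -- e3 : A3 * A3 = ε * q
  have he3 : A3 * A3 = ε * (Fintype.card F : ℂ) := by
    have h := gs_inv_pair (hpow_ne (3 * k) (by omega) (by omega)) hΘ (χ := ω ^ (3 * k))
    rw [hinvpow (3 * k) (3 * k) (by ring), hm1 (3 * k) (by omega)] at h
    have hinv : ((-1 : ℂ) ^ (3 * k))⁻¹ = ε := by
      rw [← hε]
      exact inv_eq_of_mul_eq_one_right heps
    rw [hA3, h, hinv]
  -- e1 : A1 * A4 = c * A3 * A2  (HD with χ = ω^k)
  have he1 : A1 * A4 = ((ω 2) ^ (2 * k))⁻¹ * A3 * A2 := by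
    have h := gs_HD hchar (χ := ω ^ (1 * k)) (Θ := Θ)
      (hpow_ne (1 * k) (by omega) (by omega))
      (by rw [← pow_add, show 1 * k + 1 * k = 2 * k by ring]
          exact hpow_ne (2 * k) (by omega) (by omega))
      (by rw [hηω, ← pow_add, show 3 * k + 1 * k = 4 * k by ring]
          exact hpow_ne (4 * k) (by omega) (by omega)) hΘ
    rw [hηω, ← pow_add, show 3 * k + 1 * k = 4 * k by ring, ← pow_add,
      show 1 * k + 1 * k = 2 * k by ring, hval4 (1 * k) (by omega),
      show 2 * (1 * k) = 2 * k by ring] at h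
    rw [hA1, hA2, hA3, hA4, h]
  -- e1' : A5 * A2 = c' * A3 * A4  (HD with χ = ω^(5k))
  have he1' : A5 * A2 = ((ω 2) ^ (4 * k))⁻¹ * A3 * A4 := by
    have h := gs_HD hchar (χ := ω ^ (5 * k)) (Θ := Θ)
      (hpow_ne (5 * k) (by omega) (by omega))
      (by rw [← pow_add, show 5 * k + 5 * k = 4 * k + 6 * k by ring, pow_add, hωtop, mul_one]
          exact hpow_ne (4 * k) (by omega) (by omega))
      (by rw [hηω, ← pow_add, show 3 * k + 5 * k = 2 * k + 6 * k by ring, pow_add, hωtop,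
            mul_one]
          exact hpow_ne (2 * k) (by omega) (by omega)) hΘ
    rw [hηω, ← pow_add, show 3 * k + 5 * k = 2 * k + 6 * k by ring, pow_add, hωtop, mul_one,
      ← pow_add, show 5 * k + 5 * k = 4 * k + 6 * k by ring, pow_add, hωtop, mul_one,
      hval4 (5 * k) (by omega),
      show 2 * (5 * k) = 4 * k + 6 * k by ring, pow_add, hω2six, mul_one] at h
    rw [hA5, hA2, hA3, hA4, h]
  have hA2ne : A2 ≠ 0 := hGne (2 * k) (by omega) (by omega)
  have hA3ne : A3 ≠ 0 := hGne (3 * k) (by omega) (by omega)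
  have hA4ne : A4 ≠ 0 := hGne (4 * k) (by omega) (by omega)
  -- rewrite the goal
  have hd2 : (Fintype.card F - 1) / 2 = 3 * k := by omega
  have hd3 : (Fintype.card F - 1) / 3 = 2 * k := by omega
  have hd6 : (Fintype.card F - 1) / 6 = 1 * k := by omega
  have hd23 : 2 * (Fintype.card F - 1) / 3 = 4 * k := by omega
  have hd56 : 5 * (Fintype.card F - 1) / 6 = 5 * k := by omega
  rw [hd2, hd3, hd6, hd23, hd56, hGS, hGS, hGS, hGS, hGS,
    ← hA1, ← hA2, ← hA3, ← hA4, ← hA5, ← hε]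
  have hzp : ∀ a : ℕ, (ω 2) ^ (-(a : ℤ)) = ((ω 2) ^ a)⁻¹ := by
    intro a
    rw [zpow_neg, zpow_natCast]
  rw [hzp, hzp]
  constructor
  · apply mul_right_cancel₀ (mul_ne_zero hA3ne hA4ne)
    linear_combination (-(A2 ^ 2 * A4)) * he1 + (A1 * A2 * A4) * he2 +
      (-(ε * A1 * A2 * A4)) * he3 +
      (-((Fintype.card F : ℂ) * A1 * A2 * A4)) * heps
  · apply mul_right_cancel₀ (mul_ne_zero hA3ne hA2ne)
    linear_combination (-(A4 ^ 2 * A2)) * he1' + (A5 * A4 * A2) * he2 +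
      (-(ε * A5 * A4 * A2)) * he3 +
      (-((Fintype.card F : ℂ) * A5 * A4 * A2)) * heps
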